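/- Let q ∈ (0,1), let n be a positive integer and let d ≠ 1 be a divisor of n. Then P_q(d,n) ≤ M(q, n/d)^{φ(d)}, where φ is Euler's totient function and M(q,m) = max_{0 ≤ k ≤ m} φ_q(k,m). -/

import Mathlib

open Finset

/-- The binomial probability mass function. -/
noncomputable def phi (q : ℝ) (k n : ℕ) : ℝ :=
  (n.choose k : ℝ) * q ^ k * (1 - q) ^ (n - k)

/-- The Bernoulli(q) probability weight of an outcome `c : Fin n → Bool`. -/
noncomputable def bernWeight (q : ℝ) (n : ℕ) (c : Fin n → Bool) : ℝ :=
  q ^ (Finset.univ.filter (fun j => c j = true)).card *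
    (1 - q) ^ (n - (Finset.univ.filter (fun j => c j = true)).card)

/-- Probability that the random 0/1 polynomial ∑_j c_j x^j of degree < n (with i.i.d.
Bernoulli(q) coefficients) vanishes at the primitive d-th root of unity exp(2πi/d),
i.e. that it is divisible by the d-th cyclotomic polynomial. -/
noncomputable def Pqd (q : ℝ) (d n : ℕ) : ℝ :=
  ∑ c : Fin n → Bool,
    if (∑ j : Fin n,
          (if c j then (1 : ℂ) else 0) *
            Complex.exp (2 * Real.pi * Complex.I / d) ^ (j : ℕ)) = 0 then
      bernWeight q n c
    else 0

/-- The maximum of the binomial pmf with parameters n and q. -/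
noncomputable def Mq (q : ℝ) (n : ℕ) : ℝ :=
  (Finset.range (n + 1)).sup' Finset.nonempty_range_add_one (fun k => phi q k n)

/-- count of trues -/
def cnt {m : ℕ} (b : Fin m → Bool) : ℕ := (Finset.univ.filter (fun j => b j = true)).card

lemma cnt_le {m : ℕ} (b : Fin m → Bool) : cnt b ≤ m := by
  simpa [cnt] using (Finset.card_filter_le Finset.univ (fun j => b j = true))

def E' {n m d : ℕ} (h : n = m * d) : Fin m × Fin d ≃ Fin n :=
  finProdFinEquiv.trans (finCongr h.symm)

lemma E'_val {n m d : ℕ} (h : n = m * d) (p : Fin m × Fin d) :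
    ((E' h p : Fin n) : ℕ) = (p.2 : ℕ) + d * (p.1 : ℕ) := by
  simp [E']

def packEquiv {n m d : ℕ} (h : n = m * d) : (Fin d → Fin m → Bool) ≃ (Fin n → Bool) where
  toFun C j := C ((E' h).symm j).2 ((E' h).symm j).1
  invFun c r i := c (E' h (i, r))
  left_inv C := by funext r i; simp
  right_inv c := by funext j; simp

lemma packEquiv_apply {n m d : ℕ} (h : n = m * d) (C : Fin d → Fin m → Bool)
    (p : Fin m × Fin d) : packEquiv h C (E' h p) = C p.2 p.1 := by
  simp [packEquiv]

lemma transport {M : Type*} [AddCommMonoid M] {n m d : ℕ} (h : n = m * d)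
    (C : Fin d → Fin m → Bool) (G : Bool → ℕ → M) :
    ∑ j : Fin n, G (packEquiv h C j) (j : ℕ)
      = ∑ r : Fin d, ∑ i : Fin m, G (C r i) ((r : ℕ) + d * (i : ℕ)) := by
  rw [← Equiv.sum_comp (E' h) (fun j => G (packEquiv h C j) (j : ℕ))]
  rw [Fintype.sum_prod_type]
  rw [Finset.sum_comm]
  exact Finset.sum_congr rfl fun r _ => Finset.sum_congr rfl fun i _ => by
    rw [packEquiv_apply h C (i, r), E'_val h (i, r)]

lemma phi_nonneg {q : ℝ} (hq0 : 0 ≤ q) (hq1 : q ≤ 1) (k n : ℕ) : 0 ≤ phi q k n := by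
  unfold phi
  have h1 : (0:ℝ) ≤ 1 - q := by linarith
  positivity

lemma phi_le_Mq {q : ℝ} {k n : ℕ} (hk : k ≤ n) : phi q k n ≤ Mq q n := by
  unfold Mq
  exact Finset.le_sup' (fun k => phi q k n) (Finset.mem_range.2 (Nat.lt_succ_of_le hk))

lemma Mq_nonneg {q : ℝ} (hq0 : 0 ≤ q) (hq1 : q ≤ 1) (n : ℕ) : 0 ≤ Mq q n :=
  le_trans (phi_nonneg hq0 hq1 0 n) (phi_le_Mq (Nat.zero_le n))

lemma sum_phi {q : ℝ} (n : ℕ) : ∑ k ∈ Finset.range (n + 1), phi q k n = 1 := by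
  calc ∑ k ∈ Finset.range (n + 1), phi q k n
      = ∑ k ∈ Finset.range (n + 1), q ^ k * (1 - q) ^ (n - k) * (n.choose k : ℝ) :=
        Finset.sum_congr rfl fun k _ => by unfold phi; ring
    _ = (q + (1 - q)) ^ n := (add_pow q (1 - q) n).symm
    _ = 1 := by norm_num

lemma mem_map_castLE {t d : ℕ} (hle : t ≤ d) (r : Fin d) :
    r ∈ Finset.univ.map (Fin.castLEEmb hle) ↔ (r : ℕ) < t := by
  simp only [Finset.mem_map, Finset.mem_univ, true_and]
  constructor
  · rintro ⟨i, rfl⟩; exact i.2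
  · rintro hr; exact ⟨⟨(r : ℕ), hr⟩, by ext; simp⟩

lemma key_inj {d : ℕ} (hd2 : 2 ≤ d) {ζ : ℂ} (hprim : IsPrimitiveRoot ζ d)
    (s₁ s₂ : Fin d → ℕ)
    (h₁ : ∑ r : Fin d, (s₁ r : ℂ) * ζ ^ (r : ℕ) = 0)
    (h₂ : ∑ r : Fin d, (s₂ r : ℂ) * ζ ^ (r : ℕ) = 0)
    (hH : ∀ r : Fin d, d.totient ≤ (r : ℕ) → s₁ r = s₂ r) : s₁ = s₂ := by
  set t := d.totient with ht
  have htd : t < d := Nat.totient_lt d (by omega)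
  set g : Fin t → ℚ := fun i =>
    (s₁ (Fin.castLE htd.le i) : ℚ) - (s₂ (Fin.castLE htd.le i) : ℚ) with hg
  set U : Polynomial ℚ := ∑ i : Fin t, Polynomial.C (g i) * Polynomial.X ^ (i : ℕ) with hU
  have hUdeg : U.degree < t := Polynomial.degree_sum_fin_lt g
  have haeval : Polynomial.aeval ζ U = 0 := by
    have : Polynomial.aeval ζ U = ∑ i : Fin t, ((g i : ℂ)) * ζ ^ (i : ℕ) := by
      rw [hU, map_sum]
      exact Finset.sum_congr rfl fun i _ => by
        simp [Polynomial.aeval_C, Algebra.algebraMap_eq_smul_one]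
    rw [this]
    have hdiff : ∑ r : Fin d, ((s₁ r : ℂ) - (s₂ r : ℂ)) * ζ ^ (r : ℕ) = 0 := by
      have := sub_eq_zero.2 (h₁.trans h₂.symm)
      rw [← Finset.sum_sub_distrib] at this
      rw [← this]
      exact Finset.sum_congr rfl fun r _ => by ring
    have hmap : ∑ i : Fin t, ((g i : ℂ)) * ζ ^ (i : ℕ)
        = ∑ r ∈ Finset.univ.map (Fin.castLEEmb htd.le),
            ((s₁ r : ℂ) - (s₂ r : ℂ)) * ζ ^ (r : ℕ) := by
      rw [Finset.sum_map]
      exact Finset.sum_congr rfl fun i _ => by simp [hg]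
    rw [hmap]
    rw [← hdiff]
    apply Finset.sum_subset (Finset.subset_univ _)
    intro r _ hr
    rw [mem_map_castLE] at hr
    rw [hH r (le_of_not_gt hr)]
    ring
  have hU0 : U = 0 := by
    by_contra hne
    have hdeg := minpoly.degree_le_of_ne_zero ℚ ζ hne haeval
    rw [← Polynomial.cyclotomic_eq_minpoly_rat hprim (by omega)] at hdeg
    rw [Polynomial.degree_cyclotomic] at hdeg
    exact absurd (lt_of_le_of_lt hdeg hUdeg) (lt_irrefl _)
  have hglow : ∀ i : Fin t, g i = 0 := by
    intro i
    have : U.coeff (i : ℕ) = g i := by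
      rw [hU, Polynomial.finset_sum_coeff]
      rw [Finset.sum_eq_single i]
      · simp
      · intro j _ hji
        simp only [Polynomial.coeff_C_mul, Polynomial.coeff_X_pow]
        rw [if_neg (fun hc => hji (Fin.val_injective hc).symm)]
        ring
      · simp
    rw [hU0] at this
    simpa using this.symm
  funext r
  by_cases hr : (r : ℕ) < t
  · have h0 : (s₁ (Fin.castLE htd.le ⟨(r : ℕ), hr⟩) : ℚ)
        - (s₂ (Fin.castLE htd.le ⟨(r : ℕ), hr⟩) : ℚ) = 0 := hglow ⟨(r : ℕ), hr⟩
    have hc : Fin.castLE htd.le ⟨(r : ℕ), hr⟩ = r := by ext; simp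
    rw [hc, sub_eq_zero] at h0
    exact_mod_cast h0
  · exact hH r (le_of_not_gt hr)

lemma card_cnt (m k : ℕ) :
    (Finset.univ.filter (fun b : Fin m → Bool => cnt b = k)).card = m.choose k := by
  have h := Finset.card_powersetCard k (Finset.univ : Finset (Fin m))
  rw [Finset.card_univ, Fintype.card_fin] at h
  rw [← h]
  · apply Finset.card_bij (fun b _ => Finset.univ.filter (fun j => b j = true))
    · intro b hb
      rw [Finset.mem_powersetCard]
      exact ⟨Finset.filter_subset _ _, (Finset.mem_filter.1 hb).2⟩
    · intro b₁ h₁ b₂ h₂ he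
      funext j
      have := Finset.ext_iff.1 he j
      simpa using this
    · intro S hS
      rw [Finset.mem_powersetCard] at hS
      refine ⟨fun j => decide (j ∈ S), Finset.mem_filter.2 ⟨Finset.mem_univ _, ?_⟩, ?_⟩
      · rw [← hS.2]
        unfold cnt
        congr 1
        ext j
        simp
      · ext j
        simp

lemma sum_wB {q : ℝ} {m : ℕ} (k : ℕ) :
    ∑ b ∈ Finset.univ.filter (fun b : Fin m → Bool => cnt b = k),
      q ^ cnt b * (1 - q) ^ (m - cnt b) = phi q k m := by
  rw [Finset.sum_congr rfl (fun b hb => by rw [(Finset.mem_filter.1 hb).2]),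
    Finset.sum_const, card_cnt]
  unfold phi
  rw [nsmul_eq_mul]
  ring

lemma aux_sum_le_one {d m t : ℕ} {q : ℝ} (hq0 : 0 ≤ q) (hq1 : q ≤ 1)
    (Z : Finset (Fin d → ℕ)) (hZm : ∀ s ∈ Z, ∀ r, s r ≤ m)
    (hinj : Set.InjOn (fun (s : Fin d → ℕ) (r : Fin d) => if t ≤ (r : ℕ) then s r else 0) Z) :
    ∑ s ∈ Z, ∏ r ∈ Finset.univ.filter (fun r : Fin d => t ≤ (r : ℕ)), phi q (s r) m ≤ 1 := by
  classical
  set ρ : (Fin d → ℕ) → (Fin d → ℕ) := fun s r => if t ≤ (r : ℕ) then s r else 0 with hρ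
  have hprodH_nonneg : ∀ s : Fin d → ℕ,
      0 ≤ ∏ r ∈ Finset.univ.filter (fun r : Fin d => t ≤ (r : ℕ)), phi q (s r) m := fun s =>
    Finset.prod_nonneg fun r _ => phi_nonneg hq0 hq1 _ _
  have hρH : ∀ s : Fin d → ℕ,
      ∏ r ∈ Finset.univ.filter (fun r : Fin d => t ≤ (r : ℕ)), phi q (ρ s r) m
        = ∏ r ∈ Finset.univ.filter (fun r : Fin d => t ≤ (r : ℕ)), phi q (s r) m := by
    intro s
    apply Finset.prod_congr rfl
    intro r hr
    rw [Finset.mem_filter] at hr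
    simp [hρ, hr.2]
  calc ∑ s ∈ Z, ∏ r ∈ Finset.univ.filter (fun r : Fin d => t ≤ (r : ℕ)), phi q (s r) m
      = ∑ s ∈ Z, ∏ r ∈ Finset.univ.filter (fun r : Fin d => t ≤ (r : ℕ)), phi q (ρ s r) m :=
        Finset.sum_congr rfl fun s _ => (hρH s).symm
    _ = ∑ u ∈ Z.image ρ,
          ∏ r ∈ Finset.univ.filter (fun r : Fin d => t ≤ (r : ℕ)), phi q (u r) m :=
        by rw [Finset.sum_image
          (f := fun u => ∏ r ∈ Finset.univ.filter (fun r : Fin d => t ≤ (r : ℕ)), phi q (u r) m)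
          (fun x hx y hy h => hinj hx hy h)]
    _ ≤ ∑ u ∈ Fintype.piFinset
          (fun r : Fin d => if t ≤ (r : ℕ) then Finset.range (m + 1) else {0}),
          ∏ r ∈ Finset.univ.filter (fun r : Fin d => t ≤ (r : ℕ)), phi q (u r) m := by
        apply Finset.sum_le_sum_of_subset_of_nonneg
        · intro u hu
          rw [Finset.mem_image] at hu
          obtain ⟨s, hsZ, rfl⟩ := hu
          rw [Fintype.mem_piFinset]
          intro r
          by_cases hr : t ≤ (r : ℕ)
          · simp [hρ, hr, Finset.mem_range, Nat.lt_succ_iff, hZm s hsZ r]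
          · simp [hρ, hr]
        · intro u _ _
          exact hprodH_nonneg u
    _ = ∏ r : Fin d, ∑ k ∈ (if t ≤ (r : ℕ) then Finset.range (m + 1) else {0}),
          (if t ≤ (r : ℕ) then phi q k m else 1) := by
        have hps := Finset.prod_univ_sum
          (fun r : Fin d => if t ≤ (r : ℕ) then Finset.range (m + 1) else {0})
          (fun (r : Fin d) (k : ℕ) => if t ≤ (r : ℕ) then phi q k m else 1)
        rw [hps]
        apply Finset.sum_congr rfl
        intro u _
        exact Finset.prod_filter _ _
    _ = ∏ _r : Fin d, (1 : ℝ) := by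
        apply Finset.prod_congr rfl
        intro r _
        by_cases hr : t ≤ (r : ℕ)
        · simp only [if_pos hr]
          exact sum_phi m
        · simp [if_neg hr]
    _ = 1 := Finset.prod_const_one



set_option maxHeartbeats 1000000 in
/-- Proposition 3.3 (upper bound): for a divisor d ≠ 1 of n,
P_q(d,n) ≤ M(q, n/d)^{φ(d)} where φ is Euler's totient function. -/
theorem Pqd_le (q : ℝ) (hq0 : 0 < q) (hq1 : q < 1) (n : ℕ) (hn : 0 < n)
    (d : ℕ) (hd : d ∣ n) (hd1 : d ≠ 1) :
    Pqd q d n ≤ Mq q (n / d) ^ d.totient := by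
  classical
  have hd0 : d ≠ 0 := by rintro rfl; rw [zero_dvd_iff] at hd; omega
  have hd2 : 2 ≤ d := by omega
  set m := n / d with hm
  have hnm : n = m * d := (Nat.div_mul_cancel hd).symm
  set t := d.totient with ht
  have htd : t < d := Nat.totient_lt d (by omega)
  set ζ : ℂ := Complex.exp (2 * Real.pi * Complex.I / d) with hζ
  have hprim : IsPrimitiveRoot ζ d := Complex.isPrimitiveRoot_exp d hd0
  have hζd : ζ ^ d = 1 := hprim.pow_eq_one
  -- Step 1: reindex
  have EqA : Pqd q d n = ∑ C : Fin d → Fin m → Bool,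
      (if (∑ r : Fin d, (cnt (C r) : ℂ) * ζ ^ (r : ℕ)) = 0
        then ∏ r : Fin d, q ^ cnt (C r) * (1 - q) ^ (m - cnt (C r)) else 0) := by
    unfold Pqd
    rw [← hζ]
    rw [← Equiv.sum_comp (packEquiv hnm)
      (fun c => if (∑ j : Fin n, (if c j then (1 : ℂ) else 0) * ζ ^ (j : ℕ)) = 0
        then bernWeight q n c else 0)]
    apply Finset.sum_congr rfl
    intro C _
    have hcond : (∑ j : Fin n, (if packEquiv hnm C j then (1 : ℂ) else 0) * ζ ^ (j : ℕ))
        = ∑ r : Fin d, (cnt (C r) : ℂ) * ζ ^ (r : ℕ) := by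
      rw [transport hnm C (fun b j => (if b then (1 : ℂ) else 0) * ζ ^ j)]
      apply Finset.sum_congr rfl
      intro r _
      have hz : ∀ i : Fin m, ζ ^ ((r : ℕ) + d * (i : ℕ)) = ζ ^ (r : ℕ) := fun i => by
        rw [pow_add, pow_mul, hζd, one_pow, mul_one]
      calc ∑ i : Fin m, (if C r i then (1 : ℂ) else 0) * ζ ^ ((r : ℕ) + d * (i : ℕ))
          = ∑ i : Fin m, (if C r i then (1 : ℂ) else 0) * ζ ^ (r : ℕ) :=
            Finset.sum_congr rfl fun i _ => by rw [hz i]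
        _ = (∑ i : Fin m, if C r i then (1 : ℂ) else 0) * ζ ^ (r : ℕ) :=
            (Finset.sum_mul _ _ _).symm
        _ = (cnt (C r) : ℂ) * ζ ^ (r : ℕ) := by
            simp [cnt, Finset.sum_boole]
    have hcard : (Finset.univ.filter (fun j => packEquiv hnm C j = true)).card
        = ∑ r : Fin d, cnt (C r) := by
      rw [Finset.card_filter]
      rw [transport hnm C (fun b _ => if b = true then 1 else 0)]
      exact Finset.sum_congr rfl fun r _ => (Finset.card_filter _ _).symm
    have hw : bernWeight q n (packEquiv hnm C)
        = ∏ r : Fin d, q ^ cnt (C r) * (1 - q) ^ (m - cnt (C r)) := by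
      have hle : ∀ r : Fin d, cnt (C r) ≤ m := fun r => cnt_le _
      have hs : ∑ r : Fin d, (m - cnt (C r)) = n - ∑ r : Fin d, cnt (C r) := by
        have h2 : ∑ r : Fin d, ((m - cnt (C r)) + cnt (C r)) = ∑ _r : Fin d, m :=
          Finset.sum_congr rfl fun r _ => Nat.sub_add_cancel (hle r)
        rw [Finset.sum_add_distrib, Finset.sum_const, Finset.card_univ,
          Fintype.card_fin, smul_eq_mul] at h2
        rw [hnm]
        exact Nat.eq_sub_of_add_eq (h2.trans (Nat.mul_comm d m))
      unfold bernWeight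
      rw [hcard, Finset.prod_mul_distrib, Finset.prod_pow_eq_pow_sum,
        Finset.prod_pow_eq_pow_sum, hs]
    simp only [hcond, hw]
  -- Step 2: group by count vectors
  set P : Finset (Fin d → ℕ) := Fintype.piFinset (fun _ : Fin d => Finset.range (m + 1))
    with hP
  have EqB : Pqd q d n = ∑ s ∈ P,
      (if (∑ r : Fin d, (s r : ℂ) * ζ ^ (r : ℕ)) = 0
        then ∏ r : Fin d, phi q (s r) m else 0) := by
    rw [EqA]
    rw [← Finset.sum_fiberwise_of_maps_to
      (g := fun (C : Fin d → Fin m → Bool) (r : Fin d) => cnt (C r)) (t := P)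
      (fun C _ => by simp [hP, Fintype.mem_piFinset, Nat.lt_succ_iff, cnt_le])]
    apply Finset.sum_congr rfl
    intro s hsP
    have hsm : ∀ r : Fin d, s r ≤ m := by
      rw [hP, Fintype.mem_piFinset] at hsP
      exact fun r => Nat.lt_succ_iff.1 (Finset.mem_range.1 (hsP r))
    have hfib : Finset.univ.filter
          (fun C : Fin d → Fin m → Bool => (fun r => cnt (C r)) = s)
        = Fintype.piFinset (fun r => Finset.univ.filter
            (fun b : Fin m → Bool => cnt b = s r)) := by
      ext C
      simp [Fintype.mem_piFinset, funext_iff]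
    have hinner : ∀ C ∈ Finset.univ.filter
          (fun C : Fin d → Fin m → Bool => (fun r => cnt (C r)) = s),
        (if (∑ r : Fin d, (cnt (C r) : ℂ) * ζ ^ (r : ℕ)) = 0
          then ∏ r : Fin d, q ^ cnt (C r) * (1 - q) ^ (m - cnt (C r)) else 0)
        = (if (∑ r : Fin d, (s r : ℂ) * ζ ^ (r : ℕ)) = 0
          then ∏ r : Fin d, q ^ s r * (1 - q) ^ (m - s r) else 0) := by
      intro C hC
      have hCs : ∀ r : Fin d, cnt (C r) = s r :=
        fun r => congrFun (Finset.mem_filter.1 hC).2 r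
      simp only [hCs]
    rw [Finset.sum_congr rfl hinner, Finset.sum_const]
    rw [hfib, Fintype.card_piFinset]
    simp only [card_cnt]
    rw [nsmul_eq_mul, mul_ite, mul_zero]
    by_cases hc : (∑ r : Fin d, (s r : ℂ) * ζ ^ (r : ℕ)) = 0
    · rw [if_pos hc, if_pos hc, Nat.cast_prod, ← Finset.prod_mul_distrib]
      exact Finset.prod_congr rfl fun r _ => by unfold phi; ring
    · rw [if_neg hc, if_neg hc]
  -- Step 3: the bound
  set H : Finset (Fin d) := Finset.univ.filter (fun r : Fin d => t ≤ (r : ℕ)) with hH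
  set Z : Finset (Fin d → ℕ) :=
    P.filter (fun s => (∑ r : Fin d, (s r : ℂ) * ζ ^ (r : ℕ)) = 0) with hZ
  have EqC : Pqd q d n = ∑ s ∈ Z, ∏ r : Fin d, phi q (s r) m := by
    rw [EqB, hZ, Finset.sum_filter]
  have hsZm : ∀ s ∈ Z, ∀ r, s r ≤ m := by
    intro s hsZ r
    have h1 := (Finset.mem_filter.1 hsZ).1
    rw [hP, Fintype.mem_piFinset] at h1
    exact Nat.lt_succ_iff.1 (Finset.mem_range.1 (h1 r))
  have hMq0 : 0 ≤ Mq q m := Mq_nonneg hq0.le hq1.le m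
  have hprodH_nonneg : ∀ s : Fin d → ℕ, 0 ≤ ∏ r ∈ H, phi q (s r) m := fun s =>
    Finset.prod_nonneg fun r _ => phi_nonneg hq0.le hq1.le _ _
  have hstep1 : ∀ s ∈ Z, ∏ r : Fin d, phi q (s r) m
      ≤ Mq q m ^ t * ∏ r ∈ H, phi q (s r) m := by
    intro s hsZ
    have hsplit := Finset.prod_filter_mul_prod_filter_not Finset.univ
      (fun r : Fin d => t ≤ (r : ℕ)) (fun r => phi q (s r) m)
    rw [← hsplit, mul_comm (Mq q m ^ t)]
    apply mul_le_mul_of_nonneg_left ?_ (hprodH_nonneg s)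
    have hLcard : (Finset.univ.filter (fun r : Fin d => ¬ t ≤ (r : ℕ))).card = t := by
      have hLeq : Finset.univ.filter (fun r : Fin d => ¬ t ≤ (r : ℕ))
          = Finset.univ.map (Fin.castLEEmb htd.le) := by
        ext r
        rw [Finset.mem_filter, _root_.mem_map_castLE htd.le r]
        simp
      rw [hLeq, Finset.card_map, Finset.card_univ, Fintype.card_fin]
    calc ∏ r ∈ Finset.univ.filter (fun r : Fin d => ¬ t ≤ (r : ℕ)), phi q (s r) m
        ≤ ∏ r ∈ Finset.univ.filter (fun r : Fin d => ¬ t ≤ (r : ℕ)), Mq q m :=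
          Finset.prod_le_prod (fun r _ => phi_nonneg hq0.le hq1.le _ _)
            (fun r _ => phi_le_Mq (hsZm s hsZ r))
      _ = Mq q m ^ t := by rw [Finset.prod_const, hLcard]
  have hinj : Set.InjOn (fun (s : Fin d → ℕ) (r : Fin d) => if t ≤ (r : ℕ) then s r else 0) Z := by
    intro s₁ h1 s₂ h2 he
    have c1 := (Finset.mem_filter.1 h1).2
    have c2 := (Finset.mem_filter.1 h2).2
    exact key_inj hd2 hprim s₁ s₂ c1 c2 (fun r hr => by
      have h3 := congrFun he r
      simpa [ht, hr] using h3)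
  have hsum1 : ∑ s ∈ Z, ∏ r ∈ H, phi q (s r) m ≤ 1 := by
    rw [hH]
    exact aux_sum_le_one hq0.le hq1.le Z hsZm hinj
  calc Pqd q d n = ∑ s ∈ Z, ∏ r : Fin d, phi q (s r) m := EqC
    _ ≤ ∑ s ∈ Z, Mq q m ^ t * ∏ r ∈ H, phi q (s r) m := Finset.sum_le_sum hstep1
    _ = Mq q m ^ t * ∑ s ∈ Z, ∏ r ∈ H, phi q (s r) m := by rw [Finset.mul_sum]
    _ ≤ Mq q m ^ t * 1 := mul_le_mul_of_nonneg_left hsum1 (pow_nonneg hMq0 t)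
    _ = Mq q m ^ t := mul_one _
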